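/- arXiv:1601.06312 — 4 statements merged into one kernel-verified Lean document; each statement's English description precedes it below -/
import Mathlib

section
/- Let R be an input-preserving channel (i.e., (x,x) ∈ R whenever x is in the domain of R), let C be an R-detecting set of words, and let w ∉ C. Then C ∪ {w} is R-detecting if and only if w ∉ (R ∪ R⁻¹)(C), where (R ∪ R⁻¹)(C) = {y : ∃u ∈ C, (u,y) ∈ R or (y,u) ∈ R}. -/
def Detecting {α : Type*} (R : List α → List α → Prop) (C : Set (List α)) : Prop :=
  ∀ u ∈ C, ∀ v ∈ C, R u v → u = v

/-- For an input-preserving channel `R` and `R`-detecting code `C`, a word `w ∉ C`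
can be added into `C` iff `w ∉ (R ∪ R⁻¹)(C)`. -/
theorem addWord_iff {α : Type*} (R : List α → List α → Prop) (C : Set (List α))
    (hIP : ∀ x : List α, (∃ y, R x y) → R x x)
    (hC : Detecting R C) (w : List α) (hw : w ∉ C) :
    Detecting R (C ∪ {w}) ↔ w ∉ {y : List α | ∃ u ∈ C, R u y ∨ R y u} := by
  constructor
  · rintro h ⟨u, hu, huw | hwu⟩
    · exact hw (h u (Or.inl hu) w (Or.inr rfl) huw ▸ hu)
    · exact hw ((h w (Or.inr rfl) u (Or.inl hu) hwu).symm ▸ hu)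
  · rintro h u (hu | rfl) v (hv | rfl) huv
    · exact hC u hu v hv huv
    · exact absurd ⟨u, hu, Or.inl huv⟩ h
    · exact absurd ⟨v, hv, Or.inr huv⟩ h
    · rfl
end

section
/- Let R be an input-preserving channel and let C ⊆ Σ^ℓ be an R-detecting block code. Then C is maximal R-detecting (no word of Σ^ℓ outside C can be added while preserving R-detection) if and only if Σ^ℓ \ (R ∪ R⁻¹)(C) = ∅. -/
/-- For an input-preserving channel `R` and an `R`-detecting block code `C ⊆ Σ^ℓ`,
`C` is maximal `R`-detecting iff `Σ^ℓ \ (R ∪ R⁻¹)(C) = ∅`. -/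
theorem maximal_iff_diff_empty {α : Type*} (R : List α → List α → Prop)
    (ℓ : ℕ) (C : Set (List α))
    (hIP : ∀ x : List α, R x x)
    (hC : C ⊆ {w : List α | w.length = ℓ}) (hdet : Detecting R C) :
    (∀ w : List α, w.length = ℓ → w ∉ C → ¬ Detecting R (C ∪ {w}))
    ↔ {w : List α | w.length = ℓ} \ {y : List α | ∃ u ∈ C, R u y ∨ R y u} = ∅ := by
  constructor
  · intro hmax
    ext w
    simp only [Set.mem_diff, Set.mem_setOf_eq, Set.mem_empty_iff_false, iff_false, not_and,
      not_not]
    intro hlen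
    by_contra hno
    push_neg at hno
    by_cases hw : w ∈ C
    · exact (hno w hw).1 (hIP w)
    · apply hmax w hlen hw
      intro u hu v hv huv
      by_contra hne
      rcases hu with hu | hu
      · rcases hv with hv | hv
        · exact hne (hdet u hu v hv huv)
        · rw [Set.mem_singleton_iff] at hv; subst hv
          exact (hno u hu).1 huv
      · rw [Set.mem_singleton_iff] at hu; subst hu
        rcases hv with hv | hv
        · exact (hno v hv).2 huv
        · rw [Set.mem_singleton_iff] at hv; exact hne hv.symm
  · intro hempty w hlen hw hdet'
    have : w ∈ {w : List α | w.length = ℓ} \ {y : List α | ∃ u ∈ C, R u y ∨ R y u} ∨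
        ∃ u ∈ C, R u w ∨ R w u := by
      by_cases h : ∃ u ∈ C, R u w ∨ R w u
      · exact Or.inr h
      · exact Or.inl ⟨hlen, h⟩
    rcases this with h | ⟨u, hu, h | h⟩
    · rw [hempty] at h; exact h
    · exact hw (hdet' u (Or.inl hu) w (Or.inr rfl) h ▸ hu)
    · have := hdet' w (Or.inr rfl) u (Or.inl hu) h
      exact hw (this ▸ hu)
end

section
/- Let Σ be a finite nonempty alphabet, R an input-preserving channel, and C ⊆ Σ^ℓ an R-detecting block code. Define the maximality index μ(C) = |Σ^ℓ ∩ (R ∪ R⁻¹)(C)| / |Σ^ℓ|. Then μ(C) = 1 if and only if C is maximal R-detecting. -/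
/-- For a finite nonempty alphabet, an input-preserving channel `R`, and an
`R`-detecting block code `C ⊆ Σ^ℓ`, the maximality index
`μ(C) = |Σ^ℓ ∩ (R ∪ R⁻¹)(C)| / |Σ^ℓ|` equals `1` iff `C` is maximal `R`-detecting. -/
theorem maximality_index_eq_one_iff {α : Type*} [Fintype α] [Nonempty α]
    (R : List α → List α → Prop) (ℓ : ℕ) (C : Set (List α))
    (hIP : ∀ x : List α, R x x)
    (hC : C ⊆ {w : List α | w.length = ℓ}) (hdet : Detecting R C) :
    (({w : List α | w.length = ℓ} ∩ {y : List α | ∃ u ∈ C, R u y ∨ R y u}).ncard : ℝ) /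
      ({w : List α | w.length = ℓ}.ncard : ℝ) = 1
    ↔ (∀ w : List α, w.length = ℓ → w ∉ C → ¬ Detecting R (C ∪ {w})) := by
  set S := {w : List α | w.length = ℓ} with hSdef
  set T := S ∩ {y : List α | ∃ u ∈ C, R u y ∨ R y u} with hTdef
  have hSfin : S.Finite := List.finite_length_eq α ℓ
  have hSne : S.Nonempty := ⟨List.replicate ℓ (Classical.arbitrary α), by
    simp [hSdef]⟩
  have hSpos : 0 < S.ncard := (Set.ncard_pos hSfin).mpr hSne
  have hTsub : T ⊆ S := Set.inter_subset_left
  have hdiv : (T.ncard : ℝ) / (S.ncard : ℝ) = 1 ↔ T = S := by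
    rw [div_eq_one_iff_eq (by exact_mod_cast hSpos.ne')]
    constructor
    · intro h
      exact Set.eq_of_subset_of_ncard_le hTsub (le_of_eq (by exact_mod_cast h.symm)) hSfin
    · intro h; rw [h]
  rw [hdiv]
  constructor
  · intro hTS w hw hwC hdet2
    have hwT : w ∈ T := hTS ▸ hw
    obtain ⟨u, huC, hR⟩ := hwT.2
    have hune : u ≠ w := fun h => hwC (h ▸ huC)
    cases hR with
    | inl h => exact hune (hdet2 u (Or.inl huC) w (Or.inr rfl) h)
    | inr h => exact hune (hdet2 w (Or.inr rfl) u (Or.inl huC) h).symm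
  · intro hmax
    refine Set.Subset.antisymm hTsub (fun w hw => ⟨hw, ?_⟩)
    by_cases hwC : w ∈ C
    · exact ⟨w, hwC, Or.inl (hIP w)⟩
    · have hnd := hmax w hw hwC
      simp only [Detecting, not_forall] at hnd
      obtain ⟨u, hu, v, hv, hR, hne⟩ := hnd
      cases hu with
      | inl huC =>
        cases hv with
        | inl hvC => exact absurd (hdet u huC v hvC hR) hne
        | inr hvw => exact ⟨u, huC, Or.inl (Set.mem_singleton_iff.mp hvw ▸ hR)⟩
      | inr huw =>
        cases hv with
        | inl hvC => exact ⟨v, hvC, Or.inr (Set.mem_singleton_iff.mp huw ▸ hR)⟩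
        | inr hvw =>
          exact absurd ((Set.mem_singleton_iff.mp huw).trans (Set.mem_singleton_iff.mp hvw).symm) hne
end

section
/- Define the overlap channel ov by: (x,y) ∈ ov iff there exist words u, z, v with z nonempty such that x = u·z and y = z·v. Let C ⊆ Σ^ℓ be a block code (ℓ ≥ 1) such that every codeword is overlap-free. Then C is ov-detecting if and only if no nonempty proper prefix (length strictly less than ℓ) of a codeword of C is a suffix of a codeword of C. -/
/-- The overlap channel: `(x,y) ∈ ov` iff `x = u·z` and `y = z·v` for some nonempty `z`. -/
def Ov {α : Type*} (x y : List α) : Prop :=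
  ∃ u z v : List α, z ≠ [] ∧ x = u ++ z ∧ y = z ++ v

/-- `w` is overlap-free: no nonempty proper prefix of `w` is also a suffix of `w`. -/
def OverlapFree {α : Type*} (w : List α) : Prop :=
  ∀ z : List α, z ≠ [] → z.length < w.length → z <+: w → ¬ z <:+ w

/-- For a block code `C ⊆ Σ^ℓ` of overlap-free words, `C` is `ov`-detecting iff
no nonempty proper prefix of a codeword is a suffix of a codeword. -/
theorem ov_detecting_iff_solid {α : Type*} {ℓ : ℕ} (hℓ : 1 ≤ ℓ)
    (C : Set (List α)) (hC : C ⊆ {w : List α | w.length = ℓ})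
    (hof : ∀ w ∈ C, OverlapFree w) :
    Detecting Ov C ↔
      ∀ z : List α, z ≠ [] → z.length < ℓ →
        ∀ w ∈ C, z <+: w → ∀ u ∈ C, ¬ z <:+ u := by
  constructor
  · intro hdet z hz hzl w hw hzw u hu hzu
    obtain ⟨a, ha⟩ := hzu
    obtain ⟨b, hb⟩ := hzw
    have huw : u = w := hdet u hu w hw (by exact ⟨a, z, b, hz, ha.symm, hb.symm⟩)
    have hwl : w.length = ℓ := hC hw
    exact hof w hw z hz (hwl ▸ hzl) ⟨b, hb⟩ (huw ▸ ⟨a, ha⟩)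
  · intro hsolid u hu w hw hov
    unfold Ov at hov
    obtain ⟨a, z, b, hz, hxu, hyw⟩ := hov
    have hul : u.length = ℓ := hC hu
    have hwl : w.length = ℓ := hC hw
    have hzle : z.length ≤ ℓ := by
      have := congrArg List.length hyw
      simp at this; omega
    rcases lt_or_eq_of_le hzle with hlt | heq
    · exact ((hsolid z hz hlt w hw ⟨b, hyw.symm⟩ u hu) ⟨a, hxu.symm⟩).elim
    · have ha : a = [] := by
        have := congrArg List.length hxu
        simp at this
        exact List.eq_nil_of_length_eq_zero (by omega)
      have hb : b = [] := by
        have := congrArg List.length hyw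
        simp at this
        exact List.eq_nil_of_length_eq_zero (by omega)
      subst ha hb
      simp at hxu hyw
      rw [hxu, hyw]
end
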